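/- Let H₁ and H₂ be graphs of equal order n and μ: V(H₁) → V(H₂) a bijection. If pt((H₁,H₂,μ)) = 1 then H₁, H₂, and (H₁,H₂,μ) all have the same number of connected components. -/

import Mathlib

open SimpleGraph

variable {V : Type*}

/-- One simultaneous round of the color change rule: all currently forceable
vertices become black. -/
def forceStep (G : SimpleGraph V) (S : Set V) : Set V :=
  S ∪ {w | ∃ v ∈ S, G.Adj v w ∧ ∀ u, G.Adj v u → u ∉ S → u = w}

/-- The (cumulative) set of black vertices after `t` simultaneous rounds,
starting from `B`; so `B^{(t)} = propSet G B t \ propSet G B (t-1)`. -/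
def propSet (G : SimpleGraph V) (B : Set V) : ℕ → Set V
  | 0 => B
  | t + 1 => forceStep G (propSet G B t)

/-- `B` is a zero forcing set of `G`. -/
def IsZFSet (G : SimpleGraph V) (B : Set V) : Prop := ∃ t, propSet G B t = Set.univ

/-- The zero forcing number `Z(G)`. -/
noncomputable def zfNum (G : SimpleGraph V) : ℕ :=
  sInf {n | ∃ B : Set V, IsZFSet G B ∧ B.ncard = n}

/-- `B` is a minimum zero forcing set of `G`. -/
def IsMinZFSet (G : SimpleGraph V) (B : Set V) : Prop := IsZFSet G B ∧ B.ncard = zfNum G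

/-- The propagation time `pt(G,B)` of a zero forcing set `B`. -/
noncomputable def ptSet (G : SimpleGraph V) (B : Set V) : ℕ :=
  sInf {t | propSet G B t = Set.univ}

/-- The minimum propagation time `pt(G)`. -/
noncomputable def ptMin (G : SimpleGraph V) : ℕ :=
  sInf (ptSet G '' {B | IsMinZFSet G B})

/-- The maximum propagation time `PT(G)`. -/
noncomputable def ptMax (G : SimpleGraph V) : ℕ :=
  sSup (ptSet G '' {B | IsMinZFSet G B})

/-- `IsChronList G S L` : starting from black set `S`, the list `L` is a valid
chronological list of forces, performed one at a time, ending with all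
vertices black. -/
def IsChronList (G : SimpleGraph V) : Set V → List (V × V) → Prop
  | S, [] => S = Set.univ
  | S, (v, w) :: L =>
      v ∈ S ∧ w ∉ S ∧ G.Adj v w ∧ (∀ u, G.Adj v u → u ∉ S → u = w) ∧
        IsChronList G (insert w S) L

/-- `F` is a set of forces of `B`: the unordered set of forces of some
chronological list of forces of `B`. -/
def IsForceSet (G : SimpleGraph V) (B : Set V) (F : Set (V × V)) : Prop :=
  ∃ L : List (V × V), IsChronList G B L ∧ {p | p ∈ L} = F

/-- The terminus of a set of forces: the vertices performing no force. -/
def termSet (F : Set (V × V)) : Set V := {v | ∀ w, (v, w) ∉ F}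

/-- The reverse set of forces. -/
def revSet (F : Set (V × V)) : Set (V × V) := (fun p : V × V => (p.2, p.1)) '' F

/-- The (cumulative) set of black vertices after `t` rounds when propagating
using only the forces in `F`, starting from `B`;
so `F^{(t)} = fpropSet G B F t \ fpropSet G B F (t-1)`. -/
def fpropSet (G : SimpleGraph V) (B : Set V) (F : Set (V × V)) : ℕ → Set V
  | 0 => B
  | t + 1 => fpropSet G B F t ∪
      {w | ∃ v, (v, w) ∈ F ∧ v ∈ fpropSet G B F t ∧ w ∉ fpropSet G B F t ∧
        ∀ u, G.Adj v u → u ∉ fpropSet G B F t → u = w}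

/-- The propagation time `pt(G,F)` of a set of forces `F` of `B`. -/
noncomputable def ptForces (G : SimpleGraph V) (B : Set V) (F : Set (V × V)) : ℕ :=
  sInf {t | fpropSet G B F t = Set.univ}

/-- `B` is an efficient zero forcing set of `G`. -/
def IsEffZFSet (G : SimpleGraph V) (B : Set V) : Prop :=
  IsMinZFSet G B ∧ ptSet G B = ptMin G

/-- `F` is an efficient set of forces of the minimum zero forcing set `B`. -/
def IsEffForces (G : SimpleGraph V) (B : Set V) (F : Set (V × V)) : Prop :=
  IsMinZFSet G B ∧ IsForceSet G B F ∧ ptForces G B F = ptMin G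

/-- The matching graph `(H₁, H₂, μ)`: the disjoint union of `H₁` and `H₂`
together with the perfect matching edges `{a, μ a}`. -/
def matchGraph {α β : Type*} (H1 : SimpleGraph α) (H2 : SimpleGraph β) (μ : α ≃ β) :
    SimpleGraph (α ⊕ β) :=
  SimpleGraph.fromRel (fun x y => match x, y with
    | Sum.inl a, Sum.inl b => H1.Adj a b
    | Sum.inr a, Sum.inr b => H2.Adj a b
    | Sum.inl a, Sum.inr b => μ a = b
    | Sum.inr _, Sum.inl _ => False)

section MatchAux

open Sum

variable {α β : Type*}

lemma matchGraph_adj_inl_inl (H1 : SimpleGraph α) (H2 : SimpleGraph β) (μ : α ≃ β)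
    (a a' : α) : (matchGraph H1 H2 μ).Adj (inl a) (inl a') ↔ H1.Adj a a' := by
  simp only [matchGraph, SimpleGraph.fromRel_adj]
  constructor
  · rintro ⟨-, h | h⟩
    · exact h
    · exact h.symm
  · exact fun h => ⟨by simp [h.ne], Or.inl h⟩

lemma matchGraph_adj_inr_inr (H1 : SimpleGraph α) (H2 : SimpleGraph β) (μ : α ≃ β)
    (b b' : β) : (matchGraph H1 H2 μ).Adj (inr b) (inr b') ↔ H2.Adj b b' := by
  simp only [matchGraph, SimpleGraph.fromRel_adj]
  constructor
  · rintro ⟨-, h | h⟩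
    · exact h
    · exact h.symm
  · exact fun h => ⟨by simp [h.ne], Or.inl h⟩

lemma matchGraph_adj_inl_inr (H1 : SimpleGraph α) (H2 : SimpleGraph β) (μ : α ≃ β)
    (a : α) (b : β) : (matchGraph H1 H2 μ).Adj (inl a) (inr b) ↔ μ a = b := by
  simp only [matchGraph, SimpleGraph.fromRel_adj]
  constructor
  · rintro ⟨-, h | h⟩
    · exact h
    · exact h.elim
  · exact fun h => ⟨by simp, Or.inl h⟩

lemma matchGraph_adj_inr_inl (H1 : SimpleGraph α) (H2 : SimpleGraph β) (μ : α ≃ β)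
    (a : α) (b : β) : (matchGraph H1 H2 μ).Adj (inr b) (inl a) ↔ μ a = b := by
  rw [SimpleGraph.adj_comm]
  exact matchGraph_adj_inl_inr H1 H2 μ a b

lemma subset_forceStep (G : SimpleGraph V) (S : Set V) : S ⊆ forceStep G S :=
  Set.subset_union_left

lemma mem_forceStep {G : SimpleGraph V} {S : Set V} {w : V} (v : V) (hv : v ∈ S)
    (hadj : G.Adj v w) (h : ∀ u, G.Adj v u → u ∉ S → u = w) : w ∈ forceStep G S :=
  Or.inr ⟨v, hv, hadj, h⟩

lemma propSet_subset_succ (G : SimpleGraph V) (B : Set V) (t : ℕ) :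
    propSet G B t ⊆ propSet G B (t + 1) :=
  subset_forceStep G _

lemma zfNum_le (G : SimpleGraph V) (B : Set V) (h : IsZFSet G B) : zfNum G ≤ B.ncard :=
  Nat.sInf_le ⟨B, h, rfl⟩

lemma exists_minZFSet (G : SimpleGraph V) : ∃ B, IsMinZFSet G B := by
  have hmem : zfNum G ∈ {n | ∃ B : Set V, IsZFSet G B ∧ B.ncard = n} :=
    Nat.sInf_mem ⟨(Set.univ : Set V).ncard, Set.univ, ⟨0, rfl⟩, rfl⟩
  obtain ⟨B, h1, h2⟩ := hmem
  exact ⟨B, h1, h2⟩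

lemma exists_pt_one (G : SimpleGraph V) (h : ptMin G = 1) :
    ∃ B, IsMinZFSet G B ∧ propSet G B 1 = Set.univ := by
  obtain ⟨B0, hB0⟩ := exists_minZFSet G
  have hne : (ptSet G '' {B | IsMinZFSet G B}).Nonempty := ⟨_, B0, hB0, rfl⟩
  have h1 : 1 ∈ ptSet G '' {B | IsMinZFSet G B} := by
    rw [← h]; exact Nat.sInf_mem hne
  obtain ⟨B, hB, hpt⟩ := h1
  refine ⟨B, hB, ?_⟩
  have hne2 : {t | propSet G B t = Set.univ}.Nonempty := hB.1
  have hmem := Nat.sInf_mem hne2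
  rw [show sInf {t | propSet G B t = Set.univ} = 1 from hpt] at hmem
  exact hmem

lemma zf_lower {α β : Type*} [Finite α] [Finite β] (H1 : SimpleGraph α) (H2 : SimpleGraph β)
    (μ : α ≃ β) (h : ptMin (matchGraph H1 H2 μ) = 1) :
    ∀ B, IsZFSet (matchGraph H1 H2 μ) B → Nat.card α ≤ B.ncard := by
  classical
  set G := matchGraph H1 H2 μ with hGdef
  obtain ⟨B, hBmin, hprop⟩ := exists_pt_one G h
  have key : ∀ w, w ∉ B → ∃ v ∈ B, G.Adj v w ∧ ∀ u, G.Adj v u → u ∉ B → u = w := by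
    intro w hw
    have hmem : w ∈ propSet G B 1 := hprop ▸ Set.mem_univ w
    simp only [propSet, forceStep, Set.mem_union, Set.mem_setOf_eq] at hmem
    rcases hmem with hmem | hmem
    · exact absurd hmem hw
    · exact hmem
  set g : (α ⊕ β) → (α ⊕ β) := fun w => if hw : w ∉ B then (key w hw).choose else w with hg
  have hgspec : ∀ w (hw : w ∉ B), g w ∈ B ∧ G.Adj (g w) w ∧
      ∀ u, G.Adj (g w) u → u ∉ B → u = w := by
    intro w hw
    have := (key w hw).choose_spec
    simp only [hg, dif_pos hw]
    exact ⟨this.1, this.2.1, this.2.2⟩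
  have hgmem : ∀ w ∈ Bᶜ, g w ∈ B := fun w hw => (hgspec w hw).1
  have hginj : Set.InjOn g Bᶜ := by
    intro w hw w' hw' heq
    have h1 := hgspec w hw
    have h2 := hgspec w' hw'
    have := h1.2.2 w' (heq ▸ h2.2.1) hw'
    exact this.symm
  have hle := Set.ncard_le_ncard_of_injOn g hgmem hginj (Set.toFinite B)
  have htot := Set.ncard_add_ncard_compl B
  have hcard : Nat.card (α ⊕ β) = Nat.card α + Nat.card β := Nat.card_sum
  have hab : Nat.card α = Nat.card β := Nat.card_congr μ
  intro B' hB'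
  have hz := zfNum_le G B' hB'
  have hz2 : B.ncard = zfNum G := hBmin.2
  omega

lemma forceStep_image {V W : Type*} {G : SimpleGraph V} {G' : SimpleGraph W} (e : V ≃ W)
    (he : ∀ x y, G.Adj x y ↔ G'.Adj (e x) (e y)) (S : Set V) :
    e '' forceStep G S = forceStep G' (e '' S) := by
  ext w
  obtain ⟨x, rfl⟩ := e.surjective w
  rw [Set.mem_image_iff_of_inverse e.symm_apply_apply e.apply_symm_apply]
  simp only [Equiv.symm_apply_apply]
  constructor
  · rintro (hx | ⟨v, hv, hadj, hforce⟩)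
    · exact Or.inl ⟨x, hx, rfl⟩
    · refine Or.inr ⟨e v, ⟨v, hv, rfl⟩, (he v x).mp hadj, ?_⟩
      intro u hu hunot
      have hu' : G.Adj v (e.symm u) := by
        rw [he v (e.symm u), e.apply_symm_apply]; exact hu
      have hnot' : e.symm u ∉ S := by
        intro hc
        exact hunot ⟨e.symm u, hc, e.apply_symm_apply u⟩
      have := hforce (e.symm u) hu' hnot'
      rw [← this, e.apply_symm_apply]
  · rintro (⟨y, hy, hyx⟩ | ⟨v', ⟨v, hv, rfl⟩, hadj, hforce⟩)
    · exact Or.inl (e.injective hyx ▸ hy)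
    · refine Or.inr ⟨v, hv, (he v x).mpr hadj, ?_⟩
      intro u hu hunot
      have := hforce (e u) ((he v u).mp hu) (by
        rintro ⟨u', hu', heq⟩
        exact hunot (e.injective heq ▸ hu'))
      exact e.injective this

lemma isZFSet_image {V W : Type*} {G : SimpleGraph V} {G' : SimpleGraph W} (e : V ≃ W)
    (he : ∀ x y, G.Adj x y ↔ G'.Adj (e x) (e y)) {B : Set V} (h : IsZFSet G B) :
    IsZFSet G' (e '' B) := by
  have hprop : ∀ t, propSet G' (e '' B) t = e '' propSet G B t := by
    intro t
    induction t with
    | zero => rfl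
    | succ t ih =>
      show forceStep G' (propSet G' (e '' B) t) = e '' forceStep G (propSet G B t)
      rw [ih, forceStep_image e he]
  obtain ⟨t, ht⟩ := h
  refine ⟨t, ?_⟩
  rw [hprop t, ht, Set.image_univ, Equiv.range_eq_univ]

lemma matchGraph_crossing {α β : Type*} (H1 : SimpleGraph α) (H2 : SimpleGraph β) (μ : α ≃ β)
    (a : α) : ∀ {x y : α ⊕ β}, (matchGraph H1 H2 μ).Walk x y →
      Sum.elim (fun c => H1.Reachable a c) (fun b => H1.Reachable a (μ.symm b)) x →
      ¬ Sum.elim (fun c => H1.Reachable a c) (fun b => H1.Reachable a (μ.symm b)) y →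
      ∃ a₀ b₀, H1.Reachable a a₀ ∧ H2.Adj (μ a₀) b₀ ∧ ¬ H1.Reachable a (μ.symm b₀) := by
  intro x y w
  induction w with
  | nil => exact fun hx hy => absurd hx hy
  | @cons u v z hadj p ih =>
    intro hx hy
    by_cases hv : Sum.elim (fun c => H1.Reachable a c) (fun b => H1.Reachable a (μ.symm b)) v
    · exact ih hv hy
    · clear ih hy p
      rcases u with c | b <;> rcases v with c' | b'
      · rw [matchGraph_adj_inl_inl] at hadj
        simp only [Sum.elim_inl] at hx hv
        exact absurd (hx.trans hadj.reachable) hv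
      · rw [matchGraph_adj_inl_inr] at hadj
        simp only [Sum.elim_inl, Sum.elim_inr, ← hadj, Equiv.symm_apply_apply] at hx hv
        exact absurd hx hv
      · rw [matchGraph_adj_inr_inl] at hadj
        simp only [Sum.elim_inl, Sum.elim_inr, ← hadj, Equiv.symm_apply_apply] at hx hv
        exact absurd hx hv
      · rw [matchGraph_adj_inr_inr] at hadj
        simp only [Sum.elim_inr] at hx hv
        exact ⟨μ.symm b, b', hx, by simpa using hadj, hv⟩

lemma matchGraph_reach_inl {α β : Type*} [Finite α] [Finite β] (H1 : SimpleGraph α)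
    (H2 : SimpleGraph β) (μ : α ≃ β)
    (hlow : ∀ B, IsZFSet (matchGraph H1 H2 μ) B → Nat.card α ≤ B.ncard)
    {a a' : α} (hr : (matchGraph H1 H2 μ).Reachable (inl a) (inl a')) :
    H1.Reachable a a' := by
  classical
  by_contra hna
  set G := matchGraph H1 H2 μ with hGdef
  obtain ⟨w⟩ := hr
  obtain ⟨a₀, b₀, ha₀, hadj, hb₀⟩ :=
    matchGraph_crossing H1 H2 μ a w (SimpleGraph.Reachable.refl a) (by simpa using hna)
  set A : Set α := {c | H1.Reachable a c} with hA
  have hAcl : ∀ {c c'}, H1.Adj c c' → c ∈ A → c' ∈ A :=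
    fun h hc => hc.trans h.reachable
  set B' : Set (α ⊕ β) := (inl '' Aᶜ) ∪ (inr '' (μ '' A \ {μ a₀})) with hB'
  -- step 1 : every inr b with b ≠ μ a₀ is black after one step
  have h1 : ∀ b : β, b ≠ μ a₀ → inr b ∈ forceStep G B' := by
    intro b hb
    by_cases hbA : μ.symm b ∈ A
    · refine subset_forceStep G B' (Or.inr ⟨b, ⟨⟨μ.symm b, hbA, by simp⟩, hb⟩, rfl⟩)
    · refine mem_forceStep (inl (μ.symm b)) (Or.inl ⟨μ.symm b, hbA, rfl⟩) ?_ ?_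
      · rw [matchGraph_adj_inl_inr]; simp
      · intro u hu hunot
        rcases u with c' | b''
        · exfalso
          apply hunot
          rw [matchGraph_adj_inl_inl] at hu
          exact Or.inl ⟨c', fun hc' => hbA (hAcl hu.symm hc'), rfl⟩
        · rw [matchGraph_adj_inl_inr, Equiv.apply_symm_apply] at hu
          rw [hu]
  -- step 2 : inr (μ a₀) is black after two steps
  have hb₀ne : b₀ ≠ μ a₀ := by
    intro hc
    exact hb₀ (by rw [hc, Equiv.symm_apply_apply]; exact ha₀)
  have h2 : inr (μ a₀) ∈ propSet G B' 2 := by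
    refine mem_forceStep (inr b₀) (h1 b₀ hb₀ne) ?_ ?_
    · rw [matchGraph_adj_inr_inr]; exact hadj.symm
    · intro u hu hunot
      rcases u with c | b''
      · exfalso
        apply hunot
        rw [matchGraph_adj_inr_inl] at hu
        refine subset_forceStep G B' (Or.inl ⟨c, ?_, rfl⟩)
        intro hc
        refine hb₀ ?_
        rw [← hu, Equiv.symm_apply_apply]
        exact hc
      · by_cases hbb : b'' = μ a₀
        · rw [hbb]
        · exact absurd (h1 b'' hbb) hunot
  have hinr : ∀ b : β, inr b ∈ propSet G B' 2 := by
    intro b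
    by_cases hbb : b = μ a₀
    · rw [hbb]; exact h2
    · exact propSet_subset_succ G B' 1 (h1 b hbb)
  have hall : propSet G B' 3 = Set.univ := by
    ext x
    simp only [Set.mem_univ, iff_true]
    rcases x with c | b
    · by_cases hc : c ∈ A
      · refine mem_forceStep (inr (μ c)) (hinr (μ c)) ?_ ?_
        · rw [matchGraph_adj_inr_inl]
        · intro u hu hunot
          rcases u with c'' | b''
          · rw [matchGraph_adj_inr_inl] at hu
            rw [μ.injective hu]
          · exact absurd (hinr b'') hunot
      · exact propSet_subset_succ G B' 2 (propSet_subset_succ G B' 1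
          (subset_forceStep G B' (Or.inl ⟨c, hc, rfl⟩)))
    · exact propSet_subset_succ G B' 2 (hinr b)
  -- cardinality contradiction
  have hzf : IsZFSet G B' := ⟨3, hall⟩
  have hlow' := hlow B' hzf
  have hdisj : Disjoint (inl '' Aᶜ : Set (α ⊕ β)) (inr '' (μ '' A \ {μ a₀})) := by
    rw [Set.disjoint_left]
    rintro x ⟨c, -, rfl⟩ ⟨b, -, hcb⟩
    exact Sum.inl_ne_inr hcb.symm
  have hcardB' : B'.ncard = Aᶜ.ncard + (μ '' A \ {μ a₀}).ncard := by
    rw [hB', Set.ncard_union_eq hdisj (Set.toFinite _) (Set.toFinite _),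
      Set.ncard_image_of_injective _ Sum.inl_injective,
      Set.ncard_image_of_injective _ Sum.inr_injective]
  have hmemμ : μ a₀ ∈ μ '' A := ⟨a₀, ha₀, rfl⟩
  have hdiff : (μ '' A \ {μ a₀}).ncard = (μ '' A).ncard - 1 :=
    Set.ncard_diff_singleton_of_mem hmemμ
  have himg : (μ '' A).ncard = A.ncard := Set.ncard_image_of_injective _ μ.injective
  have hApos : 0 < A.ncard := (Set.ncard_pos (Set.toFinite A)).mpr ⟨a, SimpleGraph.Reachable.refl a⟩
  have htot := Set.ncard_add_ncard_compl A
  omega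

lemma matchGraph_swap_adj {α β : Type*} (H1 : SimpleGraph α) (H2 : SimpleGraph β) (μ : α ≃ β) :
    ∀ x y, (matchGraph H1 H2 μ).Adj x y ↔
      (matchGraph H2 H1 μ.symm).Adj (Equiv.sumComm α β x) (Equiv.sumComm α β y) := by
  intro x y
  rcases x with a | b <;> rcases y with a' | b' <;>
    simp only [Equiv.sumComm_apply, Sum.swap_inl, Sum.swap_inr,
      matchGraph_adj_inl_inl, matchGraph_adj_inr_inr, matchGraph_adj_inl_inr,
      matchGraph_adj_inr_inl, Equiv.symm_apply_eq]
  · exact eq_comm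
  · exact eq_comm

end MatchAux

/-- If `pt((H₁,H₂,μ)) = 1`, then `H₁`, `H₂`, and `(H₁,H₂,μ)` all have the same
number of connected components. -/
theorem matchGraph_pt_one_components {α β : Type*} [Finite α] [Finite β]
    (H1 : SimpleGraph α) (H2 : SimpleGraph β) (μ : α ≃ β)
    (h : ptMin (matchGraph H1 H2 μ) = 1) :
    Nat.card H1.ConnectedComponent = Nat.card H2.ConnectedComponent ∧
      Nat.card H2.ConnectedComponent =
        Nat.card (matchGraph H1 H2 μ).ConnectedComponent := by
  classical
  have hlow : ∀ B, IsZFSet (matchGraph H1 H2 μ) B → Nat.card α ≤ B.ncard :=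
    zf_lower H1 H2 μ h
  have hswap := matchGraph_swap_adj H1 H2 μ
  have hlow2 : ∀ B, IsZFSet (matchGraph H2 H1 μ.symm) B → Nat.card β ≤ B.ncard := by
    intro B hB
    have he' : ∀ x y, (matchGraph H2 H1 μ.symm).Adj x y ↔
        (matchGraph H1 H2 μ).Adj ((Equiv.sumComm α β).symm x) ((Equiv.sumComm α β).symm y) := by
      intro x y
      rw [hswap ((Equiv.sumComm α β).symm x) ((Equiv.sumComm α β).symm y)]
      simp
    have hzf := isZFSet_image (Equiv.sumComm α β).symm he' hB
    have hcard := hlow _ hzf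
    rw [Set.ncard_image_of_injective _ (Equiv.sumComm α β).symm.injective] at hcard
    rw [← Nat.card_congr μ]
    exact hcard
  let φ1 : H1 →g matchGraph H1 H2 μ :=
    ⟨Sum.inl, fun hadj => (matchGraph_adj_inl_inl H1 H2 μ _ _).mpr hadj⟩
  have hbij1 : Function.Bijective (ConnectedComponent.map φ1) := by
    constructor
    · intro C C'
      refine ConnectedComponent.ind₂ (fun v w hvw => ?_) C C'
      exact ConnectedComponent.sound
        (matchGraph_reach_inl H1 H2 μ hlow (ConnectedComponent.exact hvw))
    · intro C
      refine ConnectedComponent.ind (fun x => ?_) C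
      rcases x with a | b
      · exact ⟨H1.connectedComponentMk a, rfl⟩
      · refine ⟨H1.connectedComponentMk (μ.symm b), ?_⟩
        rw [ConnectedComponent.map_mk]
        exact ConnectedComponent.connectedComponentMk_eq_of_adj
          ((matchGraph_adj_inl_inr H1 H2 μ _ _).mpr (μ.apply_symm_apply b))
  let φ2 : H2 →g matchGraph H1 H2 μ :=
    ⟨Sum.inr, fun hadj => (matchGraph_adj_inr_inr H1 H2 μ _ _).mpr hadj⟩
  have hbij2 : Function.Bijective (ConnectedComponent.map φ2) := by
    constructor
    · intro C C'
      refine ConnectedComponent.ind₂ (fun v w hvw => ?_) C C'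
      have hre : (matchGraph H1 H2 μ).Reachable (Sum.inr v) (Sum.inr w) :=
        ConnectedComponent.exact hvw
      have hre2 : (matchGraph H2 H1 μ.symm).Reachable (Sum.inl v) (Sum.inl w) := by
        have := hre.map (⟨Equiv.sumComm α β, fun {x y} hxy => (hswap x y).mp hxy⟩ :
          matchGraph H1 H2 μ →g matchGraph H2 H1 μ.symm)
        simpa using this
      exact ConnectedComponent.sound (matchGraph_reach_inl H2 H1 μ.symm hlow2 hre2)
    · intro C
      refine ConnectedComponent.ind (fun x => ?_) C
      rcases x with a | b
      · refine ⟨H2.connectedComponentMk (μ a), ?_⟩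
        rw [ConnectedComponent.map_mk]
        exact (ConnectedComponent.connectedComponentMk_eq_of_adj
          ((matchGraph_adj_inl_inr H1 H2 μ _ _).mpr rfl)).symm
      · exact ⟨H2.connectedComponentMk b, rfl⟩
  have e1 : Nat.card H1.ConnectedComponent =
      Nat.card (matchGraph H1 H2 μ).ConnectedComponent :=
    Nat.card_congr (Equiv.ofBijective _ hbij1)
  have e2 : Nat.card H2.ConnectedComponent =
      Nat.card (matchGraph H1 H2 μ).ConnectedComponent :=
    Nat.card_congr (Equiv.ofBijective _ hbij2)
  exact ⟨e1.trans e2.symm, e2⟩
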